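/- Let ν⁺ = Law(exp(Z−1/2)) and ν⁻ = Law(−exp(Z−1/2)) for Z standard Gaussian, μ = (δ₁ + δ₋₁)/2, ν = (ν⁺ + ν⁻)/2. Then there is no convex function v : ℝ → ℝ with ∇v(B₁) square-integrable and a Bass measure α such that the Bass martingale M_t = E[v'(B₁)|B_t] satisfies Law(M₀) = μ and Law(M₁) = ν; i.e., (μ,ν) is not irreducible. Indeed, for any martingale coupling π ∈ MT(μ,ν), the conditional law π₁ is concentrated on (0,∞) and π₋₁ on (−∞,0). -/

import Mathlib

open MeasureTheory ProbabilityTheory Set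
open scoped ENNReal

noncomputable section

/-- Law of `exp(Z - 1/2)`, `Z` standard Gaussian. -/
def nuP : Measure ℝ := (gaussianReal 0 1).map (fun z => Real.exp (z - 1/2))

/-- Law of `-exp(Z - 1/2)`, `Z` standard Gaussian. -/
def nuM : Measure ℝ := (gaussianReal 0 1).map (fun z => -Real.exp (z - 1/2))

/-- `μ = (δ₁ + δ₋₁)/2`. -/
def muEx : Measure ℝ := (2 : ℝ≥0∞)⁻¹ • (Measure.dirac (1 : ℝ) + Measure.dirac (-1 : ℝ))

/-- `ν = (ν⁺ + ν⁻)/2`. -/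
def nuEx : Measure ℝ := (2 : ℝ≥0∞)⁻¹ • (nuP + nuM)

/-- `κf` is the kernel of a martingale coupling from `p` to `q`. -/
def MTker1 (p q : Measure ℝ) (κf : ℝ → Measure ℝ) : Prop :=
  (∀ x, IsProbabilityMeasure (κf x)) ∧ Measurable κf ∧ p.bind κf = q ∧
    ∀ᵐ x ∂p, Integrable (fun y => y) (κf x) ∧ (∫ y, y ∂(κf x)) = x

lemma meas_expf : Measurable (fun z : ℝ => Real.exp (z - 1/2)) := by fun_prop

instance : IsProbabilityMeasure nuP := Measure.isProbabilityMeasure_map meas_expf.aemeasurable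
instance : IsProbabilityMeasure nuM := Measure.isProbabilityMeasure_map meas_expf.neg.aemeasurable
instance : IsProbabilityMeasure muEx := by
  constructor
  simp only [muEx, Measure.smul_apply, Measure.add_apply, measure_univ, smul_eq_mul]
  rw [← two_mul, ← mul_assoc, ENNReal.inv_mul_cancel two_ne_zero ENNReal.ofNat_ne_top, one_mul]
instance : IsProbabilityMeasure nuEx := by
  constructor
  simp only [nuEx, Measure.smul_apply, Measure.add_apply, measure_univ, smul_eq_mul]
  rw [← two_mul, ← mul_assoc, ENNReal.inv_mul_cancel two_ne_zero ENNReal.ofNat_ne_top, one_mul]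

lemma nuP_Iic : nuP (Iic 0) = 0 := by
  rw [nuP, Measure.map_apply meas_expf measurableSet_Iic]
  convert measure_empty
  · ext z; simp [(Real.exp_pos _).not_ge]
  · infer_instance

lemma nuM_Ici : nuM (Ici 0) = 0 := by
  rw [nuM, Measure.map_apply (f := fun z : ℝ => -Real.exp (z - 1/2)) meas_expf.neg measurableSet_Ici]
  convert measure_empty
  · ext z; simp [Real.exp_pos]
  · infer_instance

lemma nuP_Ioi : nuP (Ioi 0) = 1 := by
  have := measure_add_measure_compl (μ := nuP) (measurableSet_Iic (a := (0:ℝ)))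
  rw [nuP_Iic, zero_add, compl_Iic] at this
  simpa using this

lemma nuM_Iio : nuM (Iio 0) = 1 := by
  have := measure_add_measure_compl (μ := nuM) (measurableSet_Ici (a := (0:ℝ)))
  rw [nuM_Ici, compl_Ici] at this
  simpa using this

lemma nuEx_Ioi : nuEx (Ioi 0) = 2⁻¹ := by
  have h : nuM (Ioi 0) = 0 := measure_mono_null Ioi_subset_Ici_self nuM_Ici
  simp [nuEx, nuP_Ioi, h]

lemma nuEx_Iio : nuEx (Iio 0) = 2⁻¹ := by
  have h : nuP (Iio 0) = 0 := measure_mono_null (Iio_subset_Iic_self (a := (0:ℝ))) nuP_Iic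
  simp [nuEx, nuM_Iio, h]

lemma nuEx_zero : nuEx {0} = 0 := by
  have h1 : nuP {0} = 0 := measure_mono_null (by simp) nuP_Iic
  have h2 : nuM {0} = 0 := measure_mono_null (by simp) nuM_Ici
  simp [nuEx, h1, h2]

lemma lint_exp : ∫⁻ z, ENNReal.ofReal (Real.exp (z - 1/2)) ∂(gaussianReal 0 1) = 1 := by
  rw [gaussianReal_of_var_ne_zero 0 one_ne_zero,
    lintegral_withDensity_eq_lintegral_mul _ (measurable_gaussianPDF 0 1)
      (by fun_prop)]
  have : ∀ z : ℝ, (gaussianPDF 0 1 * fun z => ENNReal.ofReal (Real.exp (z - 1/2))) z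
      = gaussianPDF 1 1 z := by
    intro z
    simp only [Pi.mul_apply, gaussianPDF, gaussianPDFReal]
    rw [← ENNReal.ofReal_mul (by positivity)]
    congr 1
    push_cast
    rw [mul_assoc, ← Real.exp_add]
    congr 1
    ring_nf
  simp_rw [this]
  exact lintegral_gaussianPDF_eq_one 1 one_ne_zero

lemma lint_abs_nuP : ∫⁻ y, ‖y‖₊ ∂nuP = 1 := by
  rw [nuP, lintegral_map measurable_nnnorm.coe_nnreal_ennreal meas_expf]
  simp_rw [← enorm_eq_nnnorm, fun z : ℝ => Real.enorm_eq_ofReal (Real.exp_pos (z - 1/2)).le]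
  exact lint_exp

lemma lint_abs_nuM : ∫⁻ y, ‖y‖₊ ∂nuM = 1 := by
  rw [nuM, lintegral_map (g := fun z : ℝ => -Real.exp (z - 1/2)) measurable_nnnorm.coe_nnreal_ennreal meas_expf.neg]
  simp_rw [nnnorm_neg]
  simp_rw [← enorm_eq_nnnorm, fun z : ℝ => Real.enorm_eq_ofReal (Real.exp_pos (z - 1/2)).le]
  exact lint_exp

lemma lint_abs_nuEx : ∫⁻ y, ‖y‖₊ ∂nuEx = 1 := by
  rw [nuEx, lintegral_smul_measure, lintegral_add_measure, lint_abs_nuP, lint_abs_nuM]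
  rw [← two_mul, smul_eq_mul, ← mul_assoc, ENNReal.inv_mul_cancel two_ne_zero ENNReal.ofNat_ne_top, one_mul]

lemma ae_muEx {p : ℝ → Prop} : (∀ᵐ x ∂muEx, p x) ↔ p 1 ∧ p (-1) := by
  rw [muEx, Measure.ae_ennreal_smul_measure_iff (by simp), ae_add_measure_iff, ae_dirac_eq,
    ae_dirac_eq]
  simp

lemma muEx_apply (s : Set ℝ) (hs : MeasurableSet s) :
    muEx s = 2⁻¹ * (s.indicator 1 1 + s.indicator 1 (-1)) := by
  simp [muEx, Measure.dirac_apply' _ hs, mul_add]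

lemma lintegral_muEx (f : ℝ → ℝ≥0∞) (hf : Measurable f) :
    ∫⁻ x, f x ∂muEx = 2⁻¹ * (f 1 + f (-1)) := by
  rw [muEx, lintegral_smul_measure, lintegral_add_measure, lintegral_dirac' _ hf,
    lintegral_dirac' _ hf, smul_eq_mul]

lemma kernel_pinned {κf : ℝ → Measure ℝ} (h : MTker1 muEx nuEx κf) :
    κf 1 (Iio 0) = 0 ∧ κf (-1) (Ioi 0) = 0 ∧ κf 1 (Ioi 0) = 1 ∧ κf (-1) (Iio 0) = 1 := by
  obtain ⟨hprob, hmeas, hbind, hmart⟩ := h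
  obtain ⟨⟨hint1, heq1⟩, hint2, heq2⟩ := ae_muEx.mp hmart
  haveI := hprob 1; haveI := hprob (-1)
  set A := ∫⁻ y, ‖y‖₊ ∂(κf 1) with hAdef
  set B := ∫⁻ y, ‖y‖₊ ∂(κf (-1)) with hBdef
  have hmn : Measurable fun y : ℝ => (‖y‖₊ : ℝ≥0∞) := measurable_nnnorm.coe_nnreal_ennreal
  have hA1 : 1 ≤ A := by
    calc (1:ℝ≥0∞) = ‖∫ y, y ∂(κf 1)‖₊ := by rw [heq1]; simp
    _ ≤ A := enorm_integral_le_lintegral_enorm _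
  have hB1 : 1 ≤ B := by
    calc (1:ℝ≥0∞) = ‖∫ y, y ∂(κf (-1))‖₊ := by rw [heq2]; simp
    _ ≤ B := enorm_integral_le_lintegral_enorm _
  have hAt : A ≠ ⊤ := hint1.hasFiniteIntegral.ne
  have hBt : B ≠ ⊤ := hint2.hasFiniteIntegral.ne
  have hAB : A + B = 2 := by
    have h1 : ∫⁻ y, ‖y‖₊ ∂(muEx.bind κf) = ∫⁻ x, ∫⁻ y, ‖y‖₊ ∂(κf x) ∂muEx :=
      Measure.lintegral_bind hmeas.aemeasurable hmn.aemeasurable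
    rw [hbind, lint_abs_nuEx, lintegral_muEx (fun x => ∫⁻ y, ‖y‖₊ ∂(κf x))
      (by exact (Measure.measurable_lintegral hmn).comp hmeas)] at h1
    have h2 : 2 * (2⁻¹ * (A + B)) = 2 * 1 := by rw [← h1]
    rwa [← mul_assoc, ENNReal.mul_inv_cancel two_ne_zero ENNReal.ofNat_ne_top, one_mul,
      mul_one] at h2
  have hA : A = 1 := le_antisymm (by
    calc A = (A + B) - B := by rw [ENNReal.add_sub_cancel_right hBt]
    _ ≤ 2 - 1 := by rw [hAB]; exact tsub_le_tsub_left hB1 2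
    _ = 1 := by
      rw [show (2:ℝ≥0∞) = 1 + 1 by norm_num, ENNReal.add_sub_cancel_left ENNReal.one_ne_top]) hA1
  have hB : B = 1 := le_antisymm (by
    calc B = (A + B) - A := by rw [add_comm, ENNReal.add_sub_cancel_right hAt]
    _ ≤ 2 - 1 := by rw [hAB]; exact tsub_le_tsub_left hA1 2
    _ = 1 := by
      rw [show (2:ℝ≥0∞) = 1 + 1 by norm_num, ENNReal.add_sub_cancel_left ENNReal.one_ne_top]) hB1
  have habs1 : ∫ y, |y| ∂(κf 1) = 1 := by
    have := integral_norm_eq_lintegral_enorm (μ := κf 1) (f := fun y : ℝ => y)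
      hint1.aestronglyMeasurable
    simp only [Real.norm_eq_abs, enorm_eq_nnnorm] at this
    rw [this, ← hAdef, hA, ENNReal.toReal_one]
  have habs2 : ∫ y, |y| ∂(κf (-1)) = 1 := by
    have := integral_norm_eq_lintegral_enorm (μ := κf (-1)) (f := fun y : ℝ => y)
      hint2.aestronglyMeasurable
    simp only [Real.norm_eq_abs, enorm_eq_nnnorm] at this
    rw [this, ← hBdef, hB, ENNReal.toReal_one]
  -- a.e. nonneg under κf 1
  have hpos : ∀ᵐ y ∂(κf 1), 0 ≤ y := by
    have hzero : ∫ y, (|y| - y) ∂(κf 1) = 0 := by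
      rw [integral_sub hint1.abs hint1, habs1, heq1, sub_self]
    have hnn : 0 ≤ᵐ[κf 1] fun y => |y| - y := ae_of_all _ fun y => sub_nonneg.2 (le_abs_self y)
    have := (integral_eq_zero_iff_of_nonneg_ae hnn (hint1.abs.sub hint1)).mp hzero
    filter_upwards [this] with y hy
    have h0 : |y| - y = 0 := hy
    linarith [abs_nonneg y]
  have hneg : ∀ᵐ y ∂(κf (-1)), y ≤ 0 := by
    have hzero : ∫ y, (|y| + y) ∂(κf (-1)) = 0 := by
      rw [integral_add hint2.abs hint2, habs2, heq2]; ring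
    have hnn : 0 ≤ᵐ[κf (-1)] fun y => |y| + y := ae_of_all _ fun y =>
      show (0:ℝ) ≤ |y| + y by linarith [neg_abs_le y]
    have := (integral_eq_zero_iff_of_nonneg_ae hnn (hint2.abs.add hint2)).mp hzero
    filter_upwards [this] with y hy
    have h0 : |y| + y = 0 := hy
    have := abs_nonneg y; linarith [le_abs_self y, neg_abs_le y]
  have hIio1 : κf 1 (Iio 0) = 0 := by
    have := ae_iff.mp hpos
    simpa [Iio, not_le] using this
  have hIoi2 : κf (-1) (Ioi 0) = 0 := by
    have := ae_iff.mp hneg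
    simpa [Ioi, not_le] using this
  -- {0} has measure 0 under both
  have h0 : κf 1 {0} = 0 ∧ κf (-1) {0} = 0 := by
    have hb : (muEx.bind κf) {0} = ∫⁻ x, κf x {0} ∂muEx :=
      Measure.bind_apply (measurableSet_singleton 0) hmeas.aemeasurable
    rw [hbind, nuEx_zero, lintegral_muEx (fun x => κf x {0})
      (by exact (Measure.measurable_coe (measurableSet_singleton 0)).comp hmeas)] at hb
    have hsum : κf 1 {0} + κf (-1) {0} = 0 := by
      have h2 : 2 * (2⁻¹ * (κf 1 {0} + κf (-1) {0})) = 2 * 0 := by rw [← hb, mul_zero]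
      rwa [← mul_assoc, ENNReal.mul_inv_cancel two_ne_zero ENNReal.ofNat_ne_top, one_mul,
        mul_zero] at h2
    exact ⟨by simpa using (add_eq_zero.mp hsum).1, by simpa using (add_eq_zero.mp hsum).2⟩
  have hIic1 : κf 1 (Iic 0) = 0 := by
    have : (Iic (0:ℝ)) ⊆ Iio 0 ∪ {0} := fun x hx => by
      rcases lt_or_eq_of_le (mem_Iic.mp hx) with h | h
      · exact Or.inl h
      · exact Or.inr (by simp [h])
    exact measure_mono_null this (measure_union_null hIio1 h0.1)
  have hIci2 : κf (-1) (Ici 0) = 0 := by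
    have : (Ici (0:ℝ)) ⊆ Ioi 0 ∪ {0} := fun x hx => by
      rcases lt_or_eq_of_le (mem_Ici.mp hx) with h | h
      · exact Or.inl h
      · exact Or.inr (by simp [← h])
    exact measure_mono_null this (measure_union_null hIoi2 h0.2)
  refine ⟨hIio1, hIoi2, ?_, ?_⟩
  · have := measure_add_measure_compl (μ := κf 1) (measurableSet_Iic (a := (0:ℝ)))
    rw [hIic1, zero_add, compl_Iic] at this; simpa using this
  · have := measure_add_measure_compl (μ := κf (-1)) (measurableSet_Ici (a := (0:ℝ)))
    rw [hIci2, zero_add, compl_Ici] at this; simpa using this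

lemma muEx_one : muEx {1} = 2⁻¹ := by
  rw [muEx_apply _ (measurableSet_singleton 1)]
  norm_num [indicator_apply]

lemma muEx_negone : muEx {-1} = 2⁻¹ := by
  rw [muEx_apply _ (measurableSet_singleton (-1))]
  norm_num [indicator_apply]

lemma no_bass :
    ¬ (∃ (α : Measure ℝ) (_ : IsProbabilityMeasure α) (v : ℝ → ℝ) (g : ℝ → ℝ),
        ConvexOn ℝ Set.univ v ∧ Measurable g ∧
        (∀ᵐ x ∂(Measure.map (fun p : ℝ × ℝ => p.1 + p.2) (α.prod (gaussianReal 0 1))),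
          HasDerivAt v (g x) x) ∧
        muEx = Measure.map (fun b => ∫ y, g (b + y) ∂(gaussianReal 0 1)) α ∧
        nuEx = Measure.map (fun p : ℝ × ℝ => g (p.1 + p.2)) (α.prod (gaussianReal 0 1))) := by
  rintro ⟨α, hα, v, g, _, hg, _, hmu, hnu⟩
  set f : ℝ → ℝ := fun b => ∫ y, g (b + y) ∂(gaussianReal 0 1) with hf
  have haef : AEMeasurable f α := by
    by_contra hc
    have h0 : muEx = 0 := by rw [hmu, Measure.map_of_not_aemeasurable hc]
    have h1 := measure_univ (μ := muEx)
    rw [h0] at h1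
    simp at h1
  have hG : Measurable (fun p : ℝ × ℝ => g (p.1 + p.2)) :=
    hg.comp (measurable_fst.add measurable_snd)
  have hmn : Measurable fun y : ℝ => (‖y‖₊ : ℝ≥0∞) := measurable_nnnorm.coe_nnreal_ennreal
  -- f ∈ {1, -1} a.e.
  have hS1 : α (f ⁻¹' {1}) = 2⁻¹ := by
    rw [← Measure.map_apply_of_aemeasurable haef (measurableSet_singleton 1), ← hmu, muEx_one]
  have hS2 : α (f ⁻¹' {-1}) = 2⁻¹ := by
    rw [← Measure.map_apply_of_aemeasurable haef (measurableSet_singleton (-1)), ← hmu,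
      muEx_negone]
  have h_in : ∀ᵐ b ∂α, f b = 1 ∨ f b = -1 := by
    have hsm : MeasurableSet ({1, -1} : Set ℝ) :=
      (measurableSet_singleton (-1)).insert 1
    have hcompl : muEx (({1, -1} : Set ℝ)ᶜ) = 0 := by
      rw [muEx_apply _ hsm.compl]
      rw [indicator_apply, indicator_apply]
      norm_num
    have h0 : α (f ⁻¹' (({1, -1} : Set ℝ)ᶜ)) = 0 := by
      rw [← Measure.map_apply_of_aemeasurable haef hsm.compl, ← hmu]
      exact hcompl
    rw [ae_iff]
    refine measure_mono_null ?_ h0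
    intro b hb
    simp only [mem_setOf_eq, not_or] at hb
    simp [hb.1, hb.2]
  -- the conditional absolute moment
  set h : ℝ → ℝ≥0∞ := fun b => ∫⁻ z, ‖g (b + z)‖₊ ∂(gaussianReal 0 1) with hhdef
  have hFm : Measurable (fun p : ℝ × ℝ => (‖g (p.1 + p.2)‖₊ : ℝ≥0∞)) :=
    hG.nnnorm.coe_nnreal_ennreal
  have hhm : Measurable h := hFm.lintegral_prod_right'
  have hint1 : ∫⁻ b, h b ∂α = 1 := by
    have h1 : ∫⁻ y, ‖y‖₊ ∂nuEx = 1 := lint_abs_nuEx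
    rw [hnu, lintegral_map hmn hG, lintegral_prod _ hFm.aemeasurable] at h1
    exact h1
  have hh1 : ∀ᵐ b ∂α, 1 ≤ h b := by
    filter_upwards [h_in] with b hb
    have hnf : (‖f b‖₊ : ℝ≥0∞) = 1 := by
      rcases hb with hb | hb <;> simp [hb]
    calc (1:ℝ≥0∞) = ‖f b‖₊ := hnf.symm
    _ = ‖∫ z, g (b + z) ∂(gaussianReal 0 1)‖₊ := rfl
    _ ≤ h b := enorm_integral_le_lintegral_enorm _
  have hh : ∀ᵐ b ∂α, h b = 1 := by
    have hae := ae_eq_of_ae_le_of_lintegral_le (μ := α) (f := fun _ => (1:ℝ≥0∞)) (g := h)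
      hh1 (by simp) hhm.aemeasurable (by rw [hint1]; simp)
    filter_upwards [hae] with b hb
    exact hb.symm
  have hzero : ∀ᵐ b ∂α, (gaussianReal 0 1) {z | g (b + z) = 0} = 0 := by
    have hpre : (α.prod (gaussianReal 0 1)) ((fun p : ℝ × ℝ => g (p.1 + p.2)) ⁻¹' {0}) = 0 := by
      rw [← Measure.map_apply hG (measurableSet_singleton 0), ← hnu]
      exact nuEx_zero
    have := (Measure.measure_prod_null (hG (measurableSet_singleton 0))).mp hpre
    filter_upwards [this] with b hb
    exact hb
  -- main pointwise conclusion
  have hmain : ∀ᵐ b ∂α,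
      (f b = 1 → ∀ᵐ z ∂(gaussianReal 0 1), 0 < g (b + z)) ∧
      (f b = -1 → ∀ᵐ z ∂(gaussianReal 0 1), g (b + z) ≤ 0) := by
    filter_upwards [hh, hzero] with b hb hz
    have hintb : Integrable (fun z => g (b + z)) (gaussianReal 0 1) := by
      refine ⟨(hg.comp (measurable_const.add measurable_id)).aestronglyMeasurable, ?_⟩
      show ∫⁻ z, ‖g (b + z)‖₊ ∂(gaussianReal 0 1) < ⊤
      rw [show ∫⁻ z, ‖g (b + z)‖₊ ∂(gaussianReal 0 1) = h b from rfl, hb]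
      exact ENNReal.one_lt_top
    have habs : ∫ z, |g (b + z)| ∂(gaussianReal 0 1) = 1 := by
      have := integral_norm_eq_lintegral_enorm (μ := gaussianReal 0 1)
        (f := fun z => g (b + z)) hintb.aestronglyMeasurable
      simp only [Real.norm_eq_abs, enorm_eq_nnnorm] at this
      rw [this, show ∫⁻ z, ‖g (b + z)‖₊ ∂(gaussianReal 0 1) = h b from rfl, hb,
        ENNReal.toReal_one]
    have hnonzero : ∀ᵐ z ∂(gaussianReal 0 1), g (b + z) ≠ 0 := by
      rw [ae_iff]
      simpa using hz
    constructor
    · intro hfb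
      have hI : ∫ z, g (b + z) ∂(gaussianReal 0 1) = 1 := hfb
      have hzero2 : ∫ z, (|g (b + z)| - g (b + z)) ∂(gaussianReal 0 1) = 0 := by
        rw [integral_sub hintb.abs hintb, habs, hI, sub_self]
      have hnn : 0 ≤ᵐ[gaussianReal 0 1] fun z => |g (b + z)| - g (b + z) :=
        ae_of_all _ fun z => sub_nonneg.2 (le_abs_self _)
      have hev := (integral_eq_zero_iff_of_nonneg_ae hnn (hintb.abs.sub hintb)).mp hzero2
      filter_upwards [hev, hnonzero] with z h1 h2
      have h3 : |g (b + z)| - g (b + z) = 0 := h1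
      rcases lt_trichotomy (g (b + z)) 0 with hlt | heq | hgt
      · exfalso; rw [abs_of_neg hlt] at h3; linarith
      · exact absurd heq h2
      · exact hgt
    · intro hfb
      have hI : ∫ z, g (b + z) ∂(gaussianReal 0 1) = -1 := hfb
      have hzero2 : ∫ z, (|g (b + z)| + g (b + z)) ∂(gaussianReal 0 1) = 0 := by
        rw [integral_add hintb.abs hintb, habs, hI]; ring
      have hnn : 0 ≤ᵐ[gaussianReal 0 1] fun z => |g (b + z)| + g (b + z) :=
        ae_of_all _ fun z => show (0:ℝ) ≤ |g (b + z)| + g (b + z) by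
          linarith [neg_abs_le (g (b + z))]
      have hev := (integral_eq_zero_iff_of_nonneg_ae hnn (hintb.abs.add hintb)).mp hzero2
      filter_upwards [hev] with z h1
      have h3 : |g (b + z)| + g (b + z) = 0 := h1
      linarith [abs_nonneg (g (b + z))]
  -- pick witnesses
  have hnull := ae_iff.mp hmain
  obtain ⟨bp, hbp1, hbpQ⟩ : ∃ b, f b = 1 ∧ ∀ᵐ z ∂(gaussianReal 0 1), 0 < g (b + z) := by
    by_contra hc
    push_neg at hc
    have hsub : f ⁻¹' {1} ⊆ {b | ¬ ((f b = 1 → ∀ᵐ z ∂(gaussianReal 0 1), 0 < g (b + z)) ∧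
        (f b = -1 → ∀ᵐ z ∂(gaussianReal 0 1), g (b + z) ≤ 0))} := by
      intro b hb hQ
      exact hc b hb ((hQ.1 hb).mono fun z hz => not_le.2 hz)
    have := measure_mono_null hsub hnull
    rw [hS1] at this
    norm_num at this
  obtain ⟨bm, hbm1, hbmQ⟩ : ∃ b, f b = -1 ∧ ∀ᵐ z ∂(gaussianReal 0 1), g (b + z) ≤ 0 := by
    by_contra hc
    push_neg at hc
    have hsub : f ⁻¹' {-1} ⊆ {b | ¬ ((f b = 1 → ∀ᵐ z ∂(gaussianReal 0 1), 0 < g (b + z)) ∧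
        (f b = -1 → ∀ᵐ z ∂(gaussianReal 0 1), g (b + z) ≤ 0))} := by
      intro b hb hQ
      exact hc b hb ((hQ.2 hb).mono fun z hz => not_lt.2 hz)
    have := measure_mono_null hsub hnull
    rw [hS2] at this
    norm_num at this
  -- final contradiction via translation invariance of Lebesgue null sets
  set P : Set ℝ := {x | 0 < g x} with hP
  have hPm : MeasurableSet P := measurableSet_lt measurable_const hg
  have hmap : ∀ b : ℝ, ((gaussianReal 0 1).map (· + b)) = gaussianReal b 1 := fun b => by
    rw [gaussianReal_map_add_const b, zero_add]
  have hP1 : gaussianReal bp 1 Pᶜ = 0 := by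
    rw [← hmap bp, Measure.map_apply (by fun_prop : Measurable fun x : ℝ => x + bp) hPm.compl]
    refine measure_mono_null ?_ (ae_iff.mp hbpQ)
    intro z hz
    simp only [mem_preimage, mem_compl_iff, hP, mem_setOf_eq] at hz
    simpa [add_comm] using hz
  have hP2 : gaussianReal bm 1 P = 0 := by
    rw [← hmap bm, Measure.map_apply (by fun_prop : Measurable fun x : ℝ => x + bm) hPm]
    refine measure_mono_null ?_ (ae_iff.mp hbmQ)
    intro z hz
    simp only [mem_preimage, hP, mem_setOf_eq] at hz
    simp only [mem_setOf_eq, not_le]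
    rwa [add_comm]
  have hv1 : volume Pᶜ = 0 := gaussianReal_absolutelyContinuous' bp one_ne_zero hP1
  have hv2 : volume P = 0 := gaussianReal_absolutelyContinuous' bm one_ne_zero hP2
  have : volume (univ : Set ℝ) = 0 := by
    rw [← union_compl_self P]
    exact measure_union_null hv2 hv1
  rw [Real.volume_univ] at this
  exact ENNReal.top_ne_zero this

/-- The pair `(μ, ν) = ((δ₁+δ₋₁)/2, (ν⁺+ν⁻)/2)` admits no Bass martingale and is not
irreducible: every martingale coupling sends the mass at `1` into `(0,∞)` and the mass
at `-1` into `(-∞,0)`, and no martingale coupling can charge `{1} × (-∞,0)`. -/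
theorem mirrored_gbm_not_irreducible :
    -- conditional supports are pinned for every martingale coupling
    (∀ κf : ℝ → Measure ℝ, MTker1 muEx nuEx κf →
      ∀ᵐ x ∂muEx, (x = 1 → κf x (Set.Ioi (0 : ℝ)) = 1) ∧
        (x = -1 → κf x (Set.Iio (0 : ℝ)) = 1)) ∧
    -- (μ,ν) is not irreducible
    ¬ (∀ A B : Set ℝ, MeasurableSet A → MeasurableSet B →
        0 < muEx A → 0 < nuEx B →
        ∃ κf : ℝ → Measure ℝ, MTker1 muEx nuEx κf ∧
          0 < (muEx.bind fun x => (κf x).map (fun y => (x, y))) (A ×ˢ B)) ∧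
    -- there is no Bass martingale from μ to ν
    ¬ (∃ (α : Measure ℝ) (_ : IsProbabilityMeasure α) (v : ℝ → ℝ) (g : ℝ → ℝ),
        ConvexOn ℝ Set.univ v ∧ Measurable g ∧
        (∀ᵐ x ∂(Measure.map (fun p : ℝ × ℝ => p.1 + p.2) (α.prod (gaussianReal 0 1))),
          HasDerivAt v (g x) x) ∧
        muEx = Measure.map (fun b => ∫ y, g (b + y) ∂(gaussianReal 0 1)) α ∧
        nuEx = Measure.map (fun p : ℝ × ℝ => g (p.1 + p.2)) (α.prod (gaussianReal 0 1))) := by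
  refine ⟨?_, ?_, no_bass⟩
  · intro κf h
    obtain ⟨h1, h2, h3, h4⟩ := kernel_pinned h
    rw [ae_muEx]
    refine ⟨⟨fun _ => h3, fun hc => absurd hc (by norm_num)⟩,
      ⟨fun hc => absurd hc (by norm_num), fun _ => h4⟩⟩
  · intro hirr
    obtain ⟨κf, hMT, hpos⟩ := hirr {1} (Iio 0) (measurableSet_singleton 1) measurableSet_Iio
      (by rw [muEx_one]; norm_num) (by rw [nuEx_Iio]; norm_num)
    obtain ⟨hprob, hmeas, hbind, hmart⟩ := hMT
    obtain ⟨h1, h2, h3, h4⟩ := kernel_pinned ⟨hprob, hmeas, hbind, hmart⟩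
    -- the coupling kernel as a Kernel
    set k : ProbabilityTheory.Kernel ℝ ℝ := ⟨κf, hmeas⟩ with hk
    haveI : ProbabilityTheory.IsMarkovKernel k := ⟨fun a => hprob a⟩
    have hsmeas : MeasurableSet (({1} : Set ℝ) ×ˢ Iio (0:ℝ)) :=
      (measurableSet_singleton 1).prod measurableSet_Iio
    have hFmeas : Measurable (fun x => (κf x).map (fun y => (x, y))) := by
      refine Measure.measurable_measure.mpr fun s hs => ?_
      have heq : ∀ x : ℝ, (κf x).map (fun y => (x, y)) s = κf x (Prod.mk x ⁻¹' s) := fun x =>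
        Measure.map_apply measurable_prodMk_left hs
      simp_rw [heq]
      exact ProbabilityTheory.Kernel.measurable_kernel_prodMk_left (κ := k) hs
    have hval : (muEx.bind fun x => (κf x).map (fun y => (x, y))) (({1} : Set ℝ) ×ˢ Iio 0) = 0 := by
      rw [Measure.bind_apply hsmeas hFmeas.aemeasurable]
      have heq : ∀ x : ℝ, (κf x).map (fun y => (x, y)) (({1} : Set ℝ) ×ˢ Iio 0)
          = κf x (Prod.mk x ⁻¹' (({1} : Set ℝ) ×ˢ Iio 0)) := fun x =>
        Measure.map_apply measurable_prodMk_left hsmeas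
      simp_rw [heq]
      rw [lintegral_muEx _ (by
        exact ProbabilityTheory.Kernel.measurable_kernel_prodMk_left (κ := k) hsmeas)]
      have e1 : κf 1 (Prod.mk (1:ℝ) ⁻¹' (({1} : Set ℝ) ×ˢ Iio 0)) = 0 :=
        measure_mono_null (fun y hy => hy.2) h1
      have e2 : κf (-1) (Prod.mk (-1:ℝ) ⁻¹' (({1} : Set ℝ) ×ˢ Iio 0)) = 0 := by
        have : Prod.mk (-1:ℝ) ⁻¹' (({1} : Set ℝ) ×ˢ Iio (0:ℝ)) ⊆ ∅ := fun y hy => by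
          have h := hy.1
          simp only [mem_singleton_iff] at h
          norm_num at h
        exact measure_mono_null this measure_empty
      rw [e1, e2]
      simp
    rw [hval] at hpos
    exact lt_irrefl _ hpos
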